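/- Let X be a complete length space, x ∈ X, k > 1 and L > 0, and suppose that for every r > L the natural inclusion-induced map G(x, r, kr) → π₁(X, x) is an isomorphism. Then for every r > L and every δ > L, the relative δ-group G(x, r, (k+1)r, δ) is trivial; that is, every loop based at x with image in the closed ball B̄_x(r) is homotopic, within the open ball B_x((k+1)r), to a finite product of δ-loops. -/

import Mathlib

open Metric unitInterval CategoryTheory
open scoped FundamentalGroupoid ENNReal Manifold

universe u

noncomputable section

/-- The length of a path in a pseudo-emetric space, as the total variation of the
parametrization. -/
def pathLength {X : Type u} [PseudoEMetricSpace X] {x y : X} (γ : Path x y) : ℝ≥0∞ :=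
  eVariationOn γ Set.univ

/-- A (pseudo-e)metric space is a *length space* if the distance between any two points is
the infimum of the lengths of paths joining them. -/
def IsLengthSpace (X : Type u) [PseudoEMetricSpace X] : Prop :=
  ∀ x y : X, edist x y = ⨅ γ : Path x y, pathLength γ

/-- Two loops are homotopic (rel endpoints) *within* the set `S` if there is a path homotopy
between them whose image is contained in `S`. -/
def HomotopicIn {X : Type u} [TopologicalSpace X] {x y : X} (γ₁ γ₂ : Path x y) (S : Set X) :
    Prop :=
  ∃ H : Path.Homotopy γ₁ γ₂, ∀ z : I × I, H z ∈ S

/-- A loop is nullhomotopic within the set `S`. -/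
def NullHomotopicIn {X : Type u} [TopologicalSpace X] {x : X} (γ : Path x x) (S : Set X) :
    Prop :=
  HomotopicIn γ (Path.refl x) S

/-- The homomorphism on fundamental groups induced by a continuous map. -/
def indHom {X Y : Type u} [TopologicalSpace X] [TopologicalSpace Y]
    (f : C(X, Y)) (x : X) : FundamentalGroup X x →* FundamentalGroup Y (f x) :=
  Functor.mapEnd (FundamentalGroupoid.mk x)
    (πₘ (TopCat.ofHom f))

/-- The class of a loop in the fundamental group. -/
def pathClass {X : Type u} [TopologicalSpace X] {x : X} (γ : Path x x) :
    FundamentalGroup X x :=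
  FundamentalGroup.fromPath ⟦γ⟧

/-- The basepoint `p` as a point of the closed ball `B̄_p(r)`. -/
def pcb {X : Type u} [MetricSpace X] (p : X) {r : ℝ} (h0 : 0 ≤ r) : closedBall p r :=
  ⟨p, mem_closedBall_self h0⟩

/-- The basepoint `p` as a point of the open ball `B_p(R)`. -/
def ctr {X : Type u} [MetricSpace X] (p : X) {R : ℝ} (hR : 0 < R) : ball p R :=
  ⟨p, mem_ball_self hR⟩

/-- The inclusion of the closed ball `B̄_p(r)` into the open ball `B_p(R)`, `r < R`. -/
def cbInclusion {X : Type u} [MetricSpace X] (p : X) {r R : ℝ} (h : r < R) :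
    C(closedBall p r, ball p R) :=
  ⟨fun z => ⟨z.1, mem_ball.mpr (lt_of_le_of_lt (mem_closedBall.mp z.2) h)⟩,
    Continuous.subtype_mk continuous_subtype_val _⟩

/-- The geometric semi-local fundamental group `G(p,r,R)`: the image of
`π₁(B̄_p(r), p) → π₁(B_p(R), p)`, as a subgroup of `π₁(B_p(R), p)`. -/
def G {X : Type u} [MetricSpace X] (p : X) {r R : ℝ} (h0 : 0 ≤ r) (hrR : r < R) :
    Subgroup (FundamentalGroup (ball p R) (ctr p (h0.trans_lt hrR))) :=
  (indHom (cbInclusion p hrR) (pcb p h0)).range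

/-- The homomorphism `π₁(B_p(R), p) → π₁(X, p)` induced by inclusion. -/
def toAmb {X : Type u} [MetricSpace X] (p : X) {R : ℝ} (hR : 0 < R) :
    FundamentalGroup (ball p R) (ctr p hR) →* FundamentalGroup X p :=
  indHom ⟨Subtype.val, continuous_subtype_val⟩ (ctr p hR)

/-- The homomorphism `π₁(B̄_p(r), p) → π₁(X, p)` induced by inclusion. -/
def cbToAmb {X : Type u} [MetricSpace X] (p : X) {r : ℝ} (h0 : 0 ≤ r) :
    FundamentalGroup (closedBall p r) (pcb p h0) →* FundamentalGroup X p :=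
  indHom ⟨Subtype.val, continuous_subtype_val⟩ (pcb p h0)

end

/-- A `δ`-loop based at `p`: a loop of the form `α * β * α⁻¹` where `β` is a closed path lying
in some ball of radius `δ` and `α` is a path from `p` to `β 0`. -/
def IsDeltaLoop {X : Type u} [MetricSpace X] {p : X} (δ : ℝ) (γ : Path p p) : Prop :=
  ∃ (z c : X) (α : Path p z) (β : Path z z),
    (∀ t, β t ∈ ball c δ) ∧ γ = (α.trans β).trans α.symm

/-- The concatenation of a finite list of loops based at `p`. -/
noncomputable def loopProd {X : Type u} [TopologicalSpace X] {p : X} (l : List (Path p p)) : Path p p :=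
  l.foldr Path.trans (Path.refl p)

/-- Triviality of the relative `δ`-group `G(x, r, R, δ)`: every loop based at `x` with image in
the closed ball `B̄_x(r)` is homotopic, within the open ball `B_x(R)`, to a finite product of
`δ`-loops. -/
def DeltaTrivial {X : Type u} [MetricSpace X] (x : X) (r R δ : ℝ) : Prop :=
  ∀ γ : Path x x, (∀ t, γ t ∈ closedBall x r) →
    ∃ l : List (Path x x), (∀ γ' ∈ l, IsDeltaLoop δ γ') ∧
      HomotopicIn γ (loopProd l) (ball x R)

attribute [local instance] Path.Homotopic.setoid

lemma indHom_pathClass {X Y : Type u} [TopologicalSpace X] [TopologicalSpace Y]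
    (f : C(X, Y)) (x : X) (γ : Path x x) :
    indHom f x (pathClass γ) = pathClass (γ.map f.continuous) := by
  show (πₘ (TopCat.ofHom f)).map ⟦γ⟧ = ⟦γ.map f.continuous⟧
  exact (Path.Homotopic.Quotient.mk_map γ f).symm

lemma pathClass_eq_of_homotopic {X : Type u} [TopologicalSpace X] {x : X}
    {γ₁ γ₂ : Path x x} (h : γ₁.Homotopic γ₂) : pathClass γ₁ = pathClass γ₂ := by
  show (⟦γ₁⟧ : Path.Homotopic.Quotient x x) = ⟦γ₂⟧
  exact Quotient.sound h

lemma homotopic_of_pathClass_eq {X : Type u} [TopologicalSpace X] {x : X}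
    {γ₁ γ₂ : Path x x} (h : pathClass γ₁ = pathClass γ₂) : γ₁.Homotopic γ₂ :=
  Quotient.exact (show (⟦γ₁⟧ : Path.Homotopic.Quotient x x) = ⟦γ₂⟧ from h)

lemma exists_path_rep {X : Type u} [TopologicalSpace X] {x : X} (a : FundamentalGroup X x) :
    ∃ γ : Path x x, pathClass γ = a := by
  obtain ⟨γ, hγ⟩ := Quotient.exists_rep (show Path.Homotopic.Quotient x x from a)
  exact ⟨γ, hγ⟩

lemma pathClass_conj_refl {X : Type u} [TopologicalSpace X] {x : X} (γ : Path x x) :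
    pathClass (((((Path.refl x).trans γ).trans (Path.refl x).symm).trans (Path.refl x))) =
      pathClass γ := by
  show (⟦_⟧ : FundamentalGroupoid.mk x ⟶ FundamentalGroupoid.mk x) = ⟦γ⟧
  have hcomp : ∀ p q : Path x x,
      (⟦p.trans q⟧ : FundamentalGroupoid.mk x ⟶ FundamentalGroupoid.mk x) =
        CategoryStruct.comp (X := FundamentalGroupoid.mk x) (Y := FundamentalGroupoid.mk x)
          (Z := FundamentalGroupoid.mk x) ⟦p⟧ ⟦q⟧ :=
    fun p q => rfl
  rw [Path.refl_symm, hcomp, hcomp, hcomp]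
  have hid : (⟦Path.refl x⟧ : FundamentalGroupoid.mk x ⟶ FundamentalGroupoid.mk x)
      = 𝟙 (FundamentalGroupoid.mk x) := rfl
  rw [hid]
  exact ((Category.comp_id _).trans (Category.comp_id _)).trans (Category.id_comp _)

/-- Lift of a loop into a subset containing its image. -/
def liftPath {X : Type u} [TopologicalSpace X] {x : X} (γ : Path x x) {S : Set X}
    (h : ∀ t, γ t ∈ S) (hx : x ∈ S) : Path (⟨x, hx⟩ : S) ⟨x, hx⟩ where
  toFun t := ⟨γ t, h t⟩
  continuous_toFun := γ.continuous.subtype_mk _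
  source' := Subtype.ext γ.source
  target' := Subtype.ext γ.target

lemma trans_mem {X : Type u} [TopologicalSpace X] {a b c : X} {S : Set X} {γ₁ : Path a b}
    {γ₂ : Path b c} (h₁ : ∀ t, γ₁ t ∈ S) (h₂ : ∀ t, γ₂ t ∈ S) :
    ∀ t, (γ₁.trans γ₂) t ∈ S := by
  intro t
  rw [Path.trans_apply]
  split_ifs
  · exact h₁ _
  · exact h₂ _

lemma toAmb_indHom_pathClass {X : Type u} [MetricSpace X] (p : X) {r R : ℝ} (h0 : 0 ≤ r)
    (hrR : r < R) (hR : 0 < R) (γ : Path (pcb p h0) (pcb p h0)) :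
    toAmb p hR (indHom (cbInclusion p hrR) (pcb p h0) (pathClass γ)) =
      pathClass (γ.map continuous_subtype_val) := by
  rw [indHom_pathClass]
  have h2 := indHom_pathClass (X := ↥(ball p R)) (Y := X)
    ⟨Subtype.val, continuous_subtype_val⟩ ((cbInclusion p hrR) (pcb p h0))
    (γ.map (cbInclusion p hrR).continuous)
  refine h2.trans ?_
  exact congrArg pathClass (by ext t; rfl)

set_option maxHeartbeats 2000000 in
theorem stmt8 {X : Type u} [MetricSpace X] [CompleteSpace X] (hlen : IsLengthSpace X)
    (x : X) (k L : ℝ) (hk : 1 < k) (hL : 0 < L)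
    (hiso : ∀ r, ∀ hr : L < r,
      Function.Bijective
        ((toAmb x ((hL.trans hr).trans (by nlinarith : r < k * r))).comp
          (G x (hL.trans hr).le (by nlinarith : r < k * r)).subtype)) :
    ∀ r, L < r → ∀ δ, L < δ → DeltaTrivial x r ((k + 1) * r) δ := by
  intro r hr δ hδ γ hγ
  have h0r : (0:ℝ) < r := hL.trans hr
  have hrkr : r < k * r := by nlinarith
  have h0kr : (0:ℝ) < k * r := h0r.trans hrkr
  -- small scale r'
  have hLm : L < min δ r := lt_min hδ hr
  set r' : ℝ := (L + min δ r) / 2 with hr'def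
  have hr' : L < r' := by
    have h1 : min δ r ≤ δ := min_le_left _ _
    simp only [hr'def]; linarith
  have h0r' : (0:ℝ) < r' := hL.trans hr'
  have hr'δ : r' < δ := by
    have h1 : min δ r ≤ δ := min_le_left _ _
    simp only [hr'def]; linarith
  have hr'r : r' < r := by
    have h1 : min δ r ≤ r := min_le_right _ _
    simp only [hr'def]; linarith
  have hr'kr' : r' < k * r' := by nlinarith
  have h0kr' : (0:ℝ) < k * r' := h0r'.trans hr'kr'
  -- surjectivity at scale r' : represent [γ] by a loop in the closed ball of radius r'
  obtain ⟨g, hg⟩ := (hiso r' hr').2 (pathClass γ)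
  obtain ⟨c, hc⟩ := g.2
  obtain ⟨γ', rfl⟩ := exists_path_rep c
  set γX : Path x x := γ'.map continuous_subtype_val with hγXdef
  have hγ'cb : ∀ t, γX t ∈ closedBall x r' := fun t => (γ' t).2
  have e1 : pathClass γX = pathClass γ := by
    have h2 : toAmb x h0kr'
        (indHom (cbInclusion x hr'kr') (pcb x h0r'.le) (pathClass γ')) = pathClass γ := by
      rw [hc]; exact hg
    rw [toAmb_indHom_pathClass x h0r'.le hr'kr' h0kr' γ'] at h2
    exact h2
  -- the δ-loop
  set γ'' : Path x x := (((Path.refl x).trans γX).trans (Path.refl x).symm) with hγ''def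
  have hδloop : IsDeltaLoop δ γ'' :=
    ⟨x, x, Path.refl x, γX, fun t => lt_of_le_of_lt (hγ'cb t) hr'δ, rfl⟩
  refine ⟨[γ''], by simpa using hδloop, ?_⟩
  have hlp : loopProd [γ''] = γ''.trans (Path.refl x) := rfl
  -- image bounds
  have hreflmem : ∀ t, (Path.refl x) t ∈ closedBall x r := fun _ => mem_closedBall_self h0r.le
  have hlpmem : ∀ t, (loopProd [γ'']) t ∈ closedBall x r := by
    rw [hlp]
    refine trans_mem (trans_mem (trans_mem hreflmem ?_) ?_) hreflmem
    · exact fun t => closedBall_subset_closedBall hr'r.le (hγ'cb t)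
    · rw [Path.refl_symm]; exact hreflmem
  -- classes in π₁(B(x, kr))
  set La : Path _ _ := (liftPath γ hγ (mem_closedBall_self h0r.le)).map
    (cbInclusion x hrkr).continuous with hLa
  set Lb : Path _ _ := (liftPath (loopProd [γ'']) hlpmem (mem_closedBall_self h0r.le)).map
    (cbInclusion x hrkr).continuous with hLb
  have hamem : pathClass La ∈ G x h0r.le hrkr := by
    rw [hLa, ← indHom_pathClass]; exact ⟨_, rfl⟩
  have hbmem : pathClass Lb ∈ G x h0r.le hrkr := by
    rw [hLb, ← indHom_pathClass]; exact ⟨_, rfl⟩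
  -- both map to [γ] in π₁(X)
  have hmapa : toAmb x h0kr (pathClass La) = pathClass γ := by
    rw [hLa]; erw [← indHom_pathClass]
    have h5 := toAmb_indHom_pathClass x h0r.le hrkr h0kr
      (liftPath γ hγ (mem_closedBall_self h0r.le))
    exact h5.trans (congrArg pathClass (by ext t; rfl))
  have hmapb : toAmb x h0kr (pathClass Lb) = pathClass γ := by
    rw [hLb]; erw [← indHom_pathClass]
    have h5 := toAmb_indHom_pathClass x h0r.le hrkr h0kr
      (liftPath (loopProd [γ'']) hlpmem (mem_closedBall_self h0r.le))
    refine h5.trans ?_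
    have h3 : (liftPath (loopProd [γ'']) hlpmem (mem_closedBall_self h0r.le)).map
        continuous_subtype_val = loopProd [γ''] := by ext t; rfl
    erw [h3]
    exact (pathClass_conj_refl γX).trans e1
  -- injectivity at scale r
  have heq : pathClass La = pathClass Lb := by
    have := (hiso r hr).1 (a₁ := ⟨pathClass La, hamem⟩) (a₂ := ⟨pathClass Lb, hbmem⟩)
      (by show toAmb x _ (pathClass La) = toAmb x _ (pathClass Lb)
          rw [hmapa, hmapb])
    exact Subtype.ext_iff.mp this
  obtain ⟨H₀⟩ := homotopic_of_pathClass_eq heq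
  -- push the homotopy down to X
  have hfa : La.map continuous_subtype_val = γ := by ext t; rfl
  have hfb : Lb.map continuous_subtype_val = loopProd [γ''] := by ext t; rfl
  refine ⟨(H₀.map ⟨Subtype.val, continuous_subtype_val⟩).cast hfa hfb, fun z => ?_⟩
  have hz : ((H₀.map ⟨Subtype.val, continuous_subtype_val⟩).cast hfa hfb) z = (H₀ z).1 := rfl
  rw [hz]
  have hball : (H₀ z).1 ∈ ball x (k * r) := (H₀ z).2
  exact ball_subset_ball (by nlinarith) hball
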